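/- Let Q = (q₀, q₁, …, qₙ) be an open polygonal curve in ℝ³ with all consecutive vertices distinct, and let Π be the plane through q₀ normal to the first segment q₁ - q₀. If the total curvature of Q is strictly less than π/2, then Π intersects Q only at the point q₀. -/

import Mathlib

open Real InnerProductGeometry
open scoped InnerProductSpace

section AngleTriangle

variable {V : Type*} [NormedAddCommGroup V] [InnerProductSpace ℝ V]

private lemma norm_sub_cos_smul (a : V) (ha : ‖a‖ = 1) (y : V) (hy : ‖y‖ = 1) :
    ‖a - (⟪a, y⟫_ℝ) • y‖ = Real.sin (angle a y) := by
  have hc := InnerProductGeometry.cos_angle a y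
  rw [ha, hy, mul_one, div_one] at hc
  have hnn : 0 ≤ Real.sin (angle a y) :=
    Real.sin_nonneg_of_nonneg_of_le_pi (angle_nonneg a y) (angle_le_pi a y)
  have hsq : ‖a - (⟪a, y⟫_ℝ) • y‖ ^ 2 = Real.sin (angle a y) ^ 2 := by
    rw [← real_inner_self_eq_norm_sq]
    have h1 : ⟪a - (⟪a, y⟫_ℝ) • y, a - (⟪a, y⟫_ℝ) • y⟫_ℝ
        = ⟪a, a⟫_ℝ - ⟪a, y⟫_ℝ * ⟪a, y⟫_ℝ := by
      simp only [inner_sub_sub_self, real_inner_smul_left, real_inner_smul_right,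
        RCLike.conj_to_real, real_inner_self_eq_norm_sq y, hy, real_inner_comm y a]
      ring
    rw [h1, real_inner_self_eq_norm_sq a, ha, ← hc]
    nlinarith [Real.sin_sq_add_cos_sq (angle a y)]
  nlinarith [norm_nonneg (a - (⟪a, y⟫_ℝ) • y)]

private lemma angle_triangle_unit (a b c : V)
    (hna : ‖a‖ = 1) (hnb : ‖b‖ = 1) (hnc : ‖c‖ = 1)
    (hp : angle a b + angle b c < π) : angle a c ≤ angle a b + angle b c := by
  set α := angle a b with hα
  set β := angle b c with hβ
  set p := a - (⟪a, b⟫_ℝ) • b with hp_def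
  set r := c - (⟪c, b⟫_ℝ) • b with hr_def
  have hip : ⟪a, b⟫_ℝ = Real.cos α := by
    have h := InnerProductGeometry.cos_angle a b
    rw [hna, hnb, mul_one, div_one] at h
    exact h.symm
  have hic : ⟪c, b⟫_ℝ = Real.cos β := by
    have h := InnerProductGeometry.cos_angle c b
    rw [hnc, hnb, angle_comm c b, mul_one, div_one] at h
    exact h.symm
  have hnp : ‖p‖ = Real.sin α := by rw [hp_def, norm_sub_cos_smul a hna b hnb]
  have hnr : ‖r‖ = Real.sin β := by
    rw [hr_def, norm_sub_cos_smul c hnc b hnb, angle_comm c b]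
  have hpb : ⟪p, b⟫_ℝ = 0 := by
    rw [hp_def, inner_sub_left, real_inner_smul_left, real_inner_self_eq_norm_sq, hnb]
    ring
  have hrb : ⟪r, b⟫_ℝ = 0 := by
    rw [hr_def, inner_sub_left, real_inner_smul_left, real_inner_self_eq_norm_sq, hnb]
    ring
  have hkey : ⟪a, c⟫_ℝ = ⟪p, r⟫_ℝ + Real.cos α * Real.cos β := by
    have ha' : a = p + (⟪a, b⟫_ℝ) • b := by rw [hp_def]; abel
    have hc' : c = r + (⟪c, b⟫_ℝ) • b := by rw [hr_def]; abel
    calc ⟪a, c⟫_ℝ = ⟪p + (⟪a, b⟫_ℝ) • b, r + (⟪c, b⟫_ℝ) • b⟫_ℝ := by rw [← ha', ← hc']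
    _ = ⟪p, r⟫_ℝ + ⟪c, b⟫_ℝ * ⟪p, b⟫_ℝ + ⟪a, b⟫_ℝ * ⟪b, r⟫_ℝ
        + ⟪a, b⟫_ℝ * (⟪c, b⟫_ℝ * ⟪b, b⟫_ℝ) := by
      rw [inner_add_left, inner_add_right, inner_add_right, real_inner_smul_right,
        real_inner_smul_left, real_inner_smul_left, real_inner_smul_right]
      ring
    _ = ⟪p, r⟫_ℝ + Real.cos α * Real.cos β := by
      rw [hpb, real_inner_comm r b, hrb, real_inner_self_eq_norm_sq, hnb, hip, hic]
      ring
  have hCS : -(Real.sin α * Real.sin β) ≤ ⟪p, r⟫_ℝ := by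
    have h := abs_real_inner_le_norm p r
    rw [hnp, hnr] at h
    linarith [(abs_le.mp h).1]
  have hcosbound : Real.cos (α + β) ≤ ⟪a, c⟫_ℝ := by
    rw [Real.cos_add, hkey]
    linarith
  have hcac : Real.cos (angle a c) = ⟪a, c⟫_ℝ := by
    have h := InnerProductGeometry.cos_angle a c
    rw [hna, hnc, mul_one, div_one] at h
    exact h
  by_contra hcon
  push_neg at hcon
  have h1 : α + β ∈ Set.Icc 0 π :=
    ⟨add_nonneg (angle_nonneg a b) (angle_nonneg b c), hp.le⟩
  have h2 : angle a c ∈ Set.Icc 0 π := ⟨angle_nonneg a c, angle_le_pi a c⟩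
  have := Real.strictAntiOn_cos h1 h2 hcon
  rw [hcac] at this
  linarith

/-- Triangle inequality for the unoriented angle between vectors. -/
lemma angle_triangle_ineq (x y z : V) : angle x z ≤ angle x y + angle y z := by
  by_cases hp : π ≤ angle x y + angle y z
  · exact le_trans (angle_le_pi x z) hp
  push_neg at hp
  rcases eq_or_ne x 0 with rfl | hx
  · rw [angle_zero_left, angle_zero_left]
    linarith [angle_nonneg y z]
  rcases eq_or_ne z 0 with rfl | hz
  · rw [angle_zero_right, angle_zero_right]
    linarith [angle_nonneg x y]
  rcases eq_or_ne y 0 with rfl | hy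
  · rw [angle_zero_right, angle_zero_left] at hp
    linarith
  have hxn : (0:ℝ) < ‖x‖ := norm_pos_iff.mpr hx
  have hyn : (0:ℝ) < ‖y‖ := norm_pos_iff.mpr hy
  have hzn : (0:ℝ) < ‖z‖ := norm_pos_iff.mpr hz
  have hna : ‖(‖x‖⁻¹ • x)‖ = 1 := by
    rw [norm_smul, norm_inv, norm_norm, inv_mul_cancel₀ hxn.ne']
  have hnb : ‖(‖y‖⁻¹ • y)‖ = 1 := by
    rw [norm_smul, norm_inv, norm_norm, inv_mul_cancel₀ hyn.ne']
  have hnc : ‖(‖z‖⁻¹ • z)‖ = 1 := by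
    rw [norm_smul, norm_inv, norm_norm, inv_mul_cancel₀ hzn.ne']
  have hax : angle (‖x‖⁻¹ • x) (‖z‖⁻¹ • z) = angle x z := by
    rw [angle_smul_left_of_pos _ _ (inv_pos.mpr hxn),
      angle_smul_right_of_pos _ _ (inv_pos.mpr hzn)]
  have hab : angle (‖x‖⁻¹ • x) (‖y‖⁻¹ • y) = angle x y := by
    rw [angle_smul_left_of_pos _ _ (inv_pos.mpr hxn),
      angle_smul_right_of_pos _ _ (inv_pos.mpr hyn)]
  have hbc : angle (‖y‖⁻¹ • y) (‖z‖⁻¹ • z) = angle y z := by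
    rw [angle_smul_left_of_pos _ _ (inv_pos.mpr hyn),
      angle_smul_right_of_pos _ _ (inv_pos.mpr hzn)]
  have h := angle_triangle_unit (‖x‖⁻¹ • x) (‖y‖⁻¹ • y) (‖z‖⁻¹ • z) hna hnb hnc
    (by rw [hab, hbc]; exact hp)
  rw [hax, hab, hbc] at h
  exact h

end AngleTriangle

/-- The piecewise linear path through the points `q 0, q 1, q 2, …`. -/
noncomputable def plPath (q : ℕ → EuclideanSpace ℝ (Fin 3)) (t : ℝ) :
    EuclideanSpace ℝ (Fin 3) :=
  q ⌊t⌋₊ + (t - ⌊t⌋₊) • (q (⌊t⌋₊ + 1) - q ⌊t⌋₊)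

/-- If an open polygonal curve `Q = (q 0, …, q n)` with all consecutive vertices distinct
has total curvature strictly less than `π/2`, then the plane through `q 0` normal to the
first segment `q 1 - q 0` intersects `Q` only at the point `q 0`. -/
theorem normal_plane_meets_polygon_once (n : ℕ) (hn : 1 ≤ n)
    (q : ℕ → EuclideanSpace ℝ (Fin 3))
    (hcons : ∀ j < n, q j ≠ q (j + 1))
    (htc : ∑ m ∈ Finset.Ico 1 n,
      InnerProductGeometry.angle (q (m + 1) - q m) (q m - q (m - 1)) < Real.pi / 2) :
    (plPath q '' Set.Icc (0 : ℝ) n) ∩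
      {x : EuclideanSpace ℝ (Fin 3) | (inner ℝ (x - q 0) (q 1 - q 0) : ℝ) = 0} = {q 0} := by
  set v : EuclideanSpace ℝ (Fin 3) := q 1 - q 0 with hv
  have hvne : v ≠ 0 := sub_ne_zero.mpr (hcons 0 hn).symm
  -- angles nonneg
  have hangnn : ∀ k, (0:ℝ) ≤ angle (q (k + 1) - q k) (q k - q (k - 1)) :=
    fun k => angle_nonneg _ _
  -- partial angle bound by induction
  have hangle : ∀ m < n, angle (q (m + 1) - q m) v
      ≤ ∑ k ∈ Finset.Ico 1 (m + 1), angle (q (k + 1) - q k) (q k - q (k - 1)) := by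
    intro m
    induction m with
    | zero =>
      intro _
      simp only [Finset.Ico_self, Finset.sum_empty, zero_add]
      rw [angle_self hvne]
    | succ m ih =>
      intro hm
      have hm' : m < n := Nat.lt_of_succ_lt hm
      have ihm := ih hm'
      have htri := angle_triangle_ineq (q (m + 1 + 1) - q (m + 1)) (q (m + 1) - q m) v
      have hsum : ∑ k ∈ Finset.Ico 1 (m + 2), angle (q (k + 1) - q k) (q k - q (k - 1))
          = (∑ k ∈ Finset.Ico 1 (m + 1), angle (q (k + 1) - q k) (q k - q (k - 1)))
            + angle (q (m + 1 + 1) - q (m + 1)) (q (m + 1) - q (m + 1 - 1)) := by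
        rw [Finset.sum_Ico_succ_top (by omega)]
      rw [hsum]
      have : q (m + 1 - 1) = q m := by norm_num
      rw [this]
      linarith
  -- each segment makes angle < π/2 with v, hence positive inner product
  have hinner : ∀ m < n, (0:ℝ) < ⟪q (m + 1) - q m, v⟫_ℝ := by
    intro m hm
    have h1 : angle (q (m + 1) - q m) v < π / 2 := by
      have h2 := hangle m hm
      have h3 : ∑ k ∈ Finset.Ico 1 (m + 1), angle (q (k + 1) - q k) (q k - q (k - 1))
          ≤ ∑ k ∈ Finset.Ico 1 n, angle (q (k + 1) - q k) (q k - q (k - 1)) := by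
        apply Finset.sum_le_sum_of_subset_of_nonneg
        · apply Finset.Ico_subset_Ico le_rfl (by omega)
        · intro k _ _; exact hangnn k
      calc angle (q (m + 1) - q m) v ≤ _ := h2
      _ ≤ _ := h3
      _ < π / 2 := htc
    have hcos : 0 < Real.cos (angle (q (m + 1) - q m) v) := by
      apply Real.cos_pos_of_mem_Ioo
      have h0 := angle_nonneg (q (m + 1) - q m) v
      have hpi : 0 < π := Real.pi_pos
      exact ⟨by linarith, h1⟩
    have hune : q (m + 1) - q m ≠ 0 := sub_ne_zero.mpr (hcons m hm).symm
    have hun : (0:ℝ) < ‖q (m + 1) - q m‖ := norm_pos_iff.mpr hune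
    have hvn : (0:ℝ) < ‖v‖ := norm_pos_iff.mpr hvne
    have hc := InnerProductGeometry.cos_angle (q (m + 1) - q m) v
    rw [hc] at hcos
    have hprod := mul_pos hun hvn
    rcases div_pos_iff.mp hcos with ⟨h, _⟩ | ⟨_, h⟩
    · exact h
    · linarith
  -- telescoping: inner (q m - q 0) v
  have hvertex : ∀ m, ⟪q m - q 0, v⟫_ℝ = ∑ k ∈ Finset.range m, ⟪q (k + 1) - q k, v⟫_ℝ := by
    intro m
    rw [← Finset.sum_range_sub (fun k => q k)]
    rw [sum_inner]
  have hvertexpos : ∀ m, 1 ≤ m → m ≤ n → (0:ℝ) < ⟪q m - q 0, v⟫_ℝ := by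
    intro m hm1 hmn
    rw [hvertex]
    apply Finset.sum_pos
    · intro k hk
      exact hinner k (by simp at hk; omega)
    · exact ⟨0, by simp; omega⟩
  have hvertexnn : ∀ m, m ≤ n → (0:ℝ) ≤ ⟪q m - q 0, v⟫_ℝ := by
    intro m hmn
    rcases Nat.eq_zero_or_pos m with rfl | hm
    · simp
    · exact (hvertexpos m hm hmn).le
  -- positivity of f along the path for t > 0
  have hfpos : ∀ t : ℝ, 0 < t → t ≤ n → (0:ℝ) < ⟪plPath q t - q 0, v⟫_ℝ := by
    intro t ht htn
    set m := ⌊t⌋₊ with hm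
    have hmt : (m:ℝ) ≤ t := Nat.floor_le (by linarith)
    have hmn : m ≤ n := by
      have : (⌊t⌋₊ : ℕ) ≤ ⌊(n:ℝ)⌋₊ := Nat.floor_le_floor htn
      simpa using this
    have hpl : plPath q t - q 0 = (q m - q 0) + (t - m) • (q (m + 1) - q m) := by
      simp only [plPath, ← hm]
      abel
    rw [hpl, inner_add_left, real_inner_smul_left]
    rcases Nat.eq_zero_or_pos m with hm0 | hm1
    · -- t ∈ (0,1)
      rw [hm0]
      simp only [Nat.cast_zero, sub_zero, sub_self, inner_zero_left, zero_add, zero_add]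
      have h01 : ⟪q 1 - q 0, v⟫_ℝ = ⟪v, v⟫_ℝ := by rw [hv]
      have : (0:ℝ) < ⟪q (0 + 1) - q 0, v⟫_ℝ := hinner 0 (by omega)
      have := mul_pos ht this
      simpa using this
    · have h1 : (0:ℝ) < ⟪q m - q 0, v⟫_ℝ := hvertexpos m hm1 hmn
      have h2 : (0:ℝ) ≤ (t - m) * ⟪q (m + 1) - q m, v⟫_ℝ := by
        rcases lt_or_eq_of_le hmn with hlt | heq
        · exact mul_nonneg (by linarith) (hinner m hlt).le
        · have : t = n := by
            have hnt : (n:ℝ) ≤ t := by rw [← heq]; exact hmt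
            linarith
          have : (t - m) = 0 := by
            rw [this, heq]
            simp
          rw [this]; simp
      linarith
  -- assemble
  apply Set.eq_singleton_iff_unique_mem.mpr
  constructor
  · constructor
    · refine ⟨0, ?_, ?_⟩
      · exact ⟨le_rfl, by exact_mod_cast Nat.cast_nonneg n⟩
      · simp [plPath]
    · simp
  · rintro x ⟨⟨t, ⟨ht0, htn⟩, rfl⟩, hx⟩
    simp only [Set.mem_setOf_eq] at hx
    rcases lt_or_eq_of_le ht0 with ht | ht
    · exact absurd hx (ne_of_gt (hfpos t ht htn))
    · rw [← ht]
      simp [plPath]
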